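/- Let (ξ_t)_{t∈Z} be a centered stationary real process with ‖ξ_0‖_q < ∞ for some q > 2, and let γ_t = ‖E(ξ_t | M_0) − E(ξ_t)‖_1 where M_0 = σ(ξ_0, ξ_{−1}, ...). Then |Cov(ξ_0, ξ_t)| ≤ γ_t^{(q−2)/(q−1)} · ‖ξ_0‖_q^{q/(q−1)}. -/

import Mathlib

open MeasureTheory

lemma lintegral_mul_condexp_aux {Ω : Type*} [m0 : MeasurableSpace Ω]
    (μ : Measure Ω) [IsProbabilityMeasure μ] {M : MeasurableSpace Ω}
    (hm : M ≤ m0) {W g : Ω → ℝ}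
    (hW : Measurable[M] W) (hWnn : ∀ ω, 0 ≤ W ω)
    (hg : Integrable g μ) (hgnn : 0 ≤ᵐ[μ] g) :
    ∫⁻ ω, ENNReal.ofReal (W ω) * ENNReal.ofReal ((μ[g|M]) ω) ∂μ
      = ∫⁻ ω, ENNReal.ofReal (W ω) * ENNReal.ofReal (g ω) ∂μ := by
  have hY_nn : 0 ≤ᵐ[μ] μ[g|M] := condExp_nonneg hgnn
  set Wn : ℕ → Ω → ℝ := fun n ω => min (W ω) n with hWn_def
  have hWn_meas : ∀ n, Measurable[M] (Wn n) := fun n => hW.min measurable_const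
  have hWn_nn : ∀ n ω, 0 ≤ Wn n ω := fun n ω => le_min (hWnn ω) (Nat.cast_nonneg n)
  have hWn_meas0 : ∀ n, Measurable[m0] (Wn n) := fun n => (hWn_meas n).mono hm le_rfl
  have hWsup : ∀ ω, (⨆ n : ℕ, ENNReal.ofReal (Wn n ω)) = ENNReal.ofReal (W ω) := by
    intro ω
    refine le_antisymm (iSup_le fun n => ENNReal.ofReal_le_ofReal (min_le_left _ _)) ?_
    refine le_trans (le_of_eq ?_) (le_iSup _ ⌈W ω⌉₊)
    rw [hWn_def]
    simp [min_eq_left (Nat.le_ceil (W ω))]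
  have hsup : ∀ (h : Ω → ℝ), AEMeasurable h μ →
      ∫⁻ ω, ENNReal.ofReal (W ω) * ENNReal.ofReal (h ω) ∂μ
        = ⨆ n, ∫⁻ ω, ENNReal.ofReal (Wn n ω) * ENNReal.ofReal (h ω) ∂μ := by
    intro h hh
    calc ∫⁻ ω, ENNReal.ofReal (W ω) * ENNReal.ofReal (h ω) ∂μ
        = ∫⁻ ω, ⨆ n, ENNReal.ofReal (Wn n ω) * ENNReal.ofReal (h ω) ∂μ :=
          lintegral_congr fun ω => by rw [← hWsup ω, ENNReal.iSup_mul]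
      _ = ⨆ n, ∫⁻ ω, ENNReal.ofReal (Wn n ω) * ENNReal.ofReal (h ω) ∂μ := by
          refine lintegral_iSup' (fun n =>
            ((hWn_meas0 n).ennreal_ofReal.aemeasurable.mul
              (ENNReal.measurable_ofReal.comp_aemeasurable hh))) (ae_of_all _ fun ω a b hab => ?_)
          exact mul_le_mul_of_nonneg_right
            (ENNReal.ofReal_le_ofReal (min_le_min le_rfl (Nat.cast_le.2 hab))) (by positivity)
  have heq_n : ∀ n, ∫⁻ ω, ENNReal.ofReal (Wn n ω) * ENNReal.ofReal ((μ[g|M]) ω) ∂μ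
      = ∫⁻ ω, ENNReal.ofReal (Wn n ω) * ENNReal.ofReal (g ω) ∂μ := by
    intro n
    have hWn_sm : StronglyMeasurable[M] (Wn n) := (hWn_meas n).stronglyMeasurable
    have hbdd : ∃ C, ∀ ω, ‖Wn n ω‖ ≤ C :=
      ⟨n, fun ω => by
        rw [Real.norm_eq_abs, abs_of_nonneg (hWn_nn n ω)]; exact min_le_right _ _⟩
    have hWn_asm : AEStronglyMeasurable[m0] (Wn n) μ := (hWn_meas0 n).aestronglyMeasurable
    have hint_right : Integrable (fun ω => Wn n ω * g ω) μ := hg.bdd_mul hWn_asm (ae_of_all _ hbdd.choose_spec)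
    have hint_left : Integrable (fun ω => Wn n ω * (μ[g|M]) ω) μ :=
      integrable_condExp.bdd_mul hWn_asm (ae_of_all _ hbdd.choose_spec)
    have hpull := condExp_mul_of_stronglyMeasurable_left (m := M) (mΩ := m0) (μ := μ) hWn_sm
      (by exact hint_right) hg
    have hreal : ∫ ω, Wn n ω * (μ[g|M]) ω ∂μ = ∫ ω, Wn n ω * g ω ∂μ := by
      calc ∫ ω, Wn n ω * (μ[g|M]) ω ∂μ = ∫ ω, (μ[Wn n * g|M]) ω ∂μ :=
            (integral_congr_ae hpull).symm
        _ = ∫ ω, Wn n ω * g ω ∂μ := integral_condExp (m := M) (m₀ := m0) hm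
    have l1 : ∫⁻ ω, ENNReal.ofReal (Wn n ω) * ENNReal.ofReal ((μ[g|M]) ω) ∂μ
        = ENNReal.ofReal (∫ ω, Wn n ω * (μ[g|M]) ω ∂μ) := by
      rw [ofReal_integral_eq_lintegral_ofReal hint_left
        (hY_nn.mono fun ω h => mul_nonneg (hWn_nn n ω) h)]
      exact lintegral_congr fun ω => (ENNReal.ofReal_mul (hWn_nn n ω)).symm
    have l2 : ∫⁻ ω, ENNReal.ofReal (Wn n ω) * ENNReal.ofReal (g ω) ∂μ
        = ENNReal.ofReal (∫ ω, Wn n ω * g ω ∂μ) := by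
      rw [ofReal_integral_eq_lintegral_ofReal hint_right
        (hgnn.mono fun ω h => mul_nonneg (hWn_nn n ω) h)]
      exact lintegral_congr fun ω => (ENNReal.ofReal_mul (hWn_nn n ω)).symm
    rw [l1, l2, hreal]
  have hcm : Measurable[m0] (μ[g|M]) :=
    ((stronglyMeasurable_condExp (m := M) (f := g)).mono hm).measurable
  rw [hsup _ hcm.aemeasurable, hsup _ hg.aestronglyMeasurable.aemeasurable]
  exact iSup_congr heq_n

/-- Covariance inequality (Lemma A.1): for a centered stationary process with
`‖ξ₀‖_q < ∞`, `q > 2`, and `γ_t = ‖E(ξ_t|M₀) − E ξ_t‖₁` with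
`M₀ = σ(ξ₀, ξ₋₁, …)`, one has
`|Cov(ξ₀, ξ_t)| ≤ γ_t^{(q−2)/(q−1)} ‖ξ₀‖_q^{q/(q−1)}`. -/
theorem cov_bound_mixingale {Ω : Type*} [m0 : MeasurableSpace Ω]
    (μ : Measure Ω) [IsProbabilityMeasure μ] (ξ : ℤ → Ω → ℝ)
    (hmeas : ∀ s, Measurable (ξ s))
    (q : ℝ) (hq : 2 < q)
    (hLq : Integrable (fun ω => |ξ 0 ω| ^ q) μ)
    (hcentered : ∀ t, ∫ ω, ξ t ω ∂μ = 0)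
    (hstat : ∀ n : ℤ, Measure.map (fun ω => fun s : ℤ => ξ (s + n) ω) μ
      = Measure.map (fun ω => fun s : ℤ => ξ s ω) μ)
    (M : MeasurableSpace Ω)
    (hM : M = ⨆ s : {s : ℤ // s ≤ 0}, MeasurableSpace.comap (ξ s) inferInstance)
    (t : ℤ) (ht : 0 ≤ t)
    (γt : ℝ) (hγt : γt = ∫ ω, |(μ[ξ t|M]) ω - ∫ ω', ξ t ω' ∂μ| ∂μ)
    (hint : Integrable (fun ω => ξ 0 ω * ξ t ω) μ) :
    |(∫ ω, ξ 0 ω * ξ t ω ∂μ) - (∫ ω, ξ 0 ω ∂μ) * ∫ ω, ξ t ω ∂μ|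
      ≤ γt ^ ((q - 2) / (q - 1)) *
        ((∫ ω, |ξ 0 ω| ^ q ∂μ) ^ (1 / q)) ^ (q / (q - 1)) := by
  have hq1 : (1:ℝ) < q - 1 := by linarith
  have hq1pos : (0:ℝ) < q - 1 := by linarith
  have hq2 : (0:ℝ) < q - 2 := by linarith
  have hqpos : (0:ℝ) < q := by linarith
  have h1ne : q - 1 ≠ 0 := by positivity
  have h2ne : q - 2 ≠ 0 := by positivity
  have hqne : q ≠ 0 := by positivity
  have e_add : 1 / (q - 1) + (q - 2) / (q - 1) = 1 := by
    rw [← add_div, div_eq_one_iff_eq h1ne]; ring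
  have e_mul1 : 1 / (q - 1) * (q - 1) = 1 := by field_simp
  have e_mul2 : (q - 2) / (q - 1) * ((q - 1) / (q - 2)) = 1 := by
    field_simp
  have e_q : (q - 1) / q + 1 / q = 1 := by
    rw [← add_div, div_eq_one_iff_eq hqne]; ring
  have e_exp1 : (q - 1) * (q / (q - 1)) = q := by field_simp
  letI : MeasurableSpace Ω := m0
  -- M ≤ m0 and M-measurability of ξ 0
  have hm : M ≤ m0 := by
    rw [hM]
    exact iSup_le fun s => measurable_iff_comap_le.mp (hmeas s)
  have hξ0M : Measurable[M] (ξ 0) := by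
    refine measurable_iff_comap_le.mpr ?_
    rw [hM]
    exact le_iSup (fun s : {s : ℤ // s ≤ 0} =>
      MeasurableSpace.comap (ξ s.1) inferInstance) ⟨0, le_refl 0⟩
  set Y := μ[ξ t|M] with hYdef
  set Z := μ[(fun ω => |ξ t ω|)|M] with hZdef
  -- stationarity : map (ξ t) μ = map (ξ 0) μ
  have hmapmeas : ∀ n : ℤ, Measurable[m0] (fun ω => fun s : ℤ => ξ (s + n) ω) :=
    fun n => measurable_pi_lambda _ fun s => hmeas (s + n)
  have hmapmeas0 : Measurable[m0] (fun ω => fun s : ℤ => ξ s ω) :=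
    measurable_pi_lambda _ fun s => hmeas s
  have hmap : μ.map (ξ t) = μ.map (ξ 0) := by
    have e1 : ξ t = (fun f : ℤ → ℝ => f 0) ∘ (fun ω => fun s : ℤ => ξ (s + t) ω) := by
      funext ω; simp
    have e0 : ξ 0 = (fun f : ℤ → ℝ => f 0) ∘ (fun ω => fun s : ℤ => ξ s ω) := rfl
    rw [e1, e0, ← Measure.map_map (measurable_pi_apply 0) (hmapmeas t),
      ← Measure.map_map (measurable_pi_apply 0) hmapmeas0, hstat t]
  have habs_meas : Measurable[_root_.Real.measurableSpace] (fun x : ℝ => |x| ^ q) :=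
    (Real.continuous_rpow_const (le_of_lt hqpos)).measurable.comp measurable_abs
  have hLqt : Integrable (fun ω => |ξ t ω| ^ q) μ := by
    have h0 : Integrable (fun x : ℝ => |x| ^ q) (μ.map (ξ 0)) :=
      (integrable_map_measure habs_meas.aestronglyMeasurable (hmeas 0).aemeasurable).mpr hLq
    rw [← hmap] at h0
    exact (integrable_map_measure habs_meas.aestronglyMeasurable (hmeas t).aemeasurable).mp h0
  have hIq_eq : ∫ ω, |ξ t ω| ^ q ∂μ = ∫ ω, |ξ 0 ω| ^ q ∂μ := by
    rw [← integral_map (hmeas t).aemeasurable habs_meas.aestronglyMeasurable, hmap,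
      integral_map (hmeas 0).aemeasurable habs_meas.aestronglyMeasurable]
  -- integrability of ξ t
  have habs_le : ∀ x : ℝ, |x| ≤ 1 + |x| ^ q := by
    intro x
    rcases le_total (|x|) 1 with h | h
    · have := Real.rpow_nonneg (abs_nonneg x) q
      linarith
    · have h1 : |x| ^ (1:ℝ) ≤ |x| ^ q :=
        Real.rpow_le_rpow_of_exponent_le h (by linarith)
      rw [Real.rpow_one] at h1
      linarith
  have hξt_int : Integrable (ξ t) μ := by
    refine Integrable.mono ((integrable_const (1:ℝ)).add hLqt)
      (hmeas t).aestronglyMeasurable (ae_of_all _ fun ω => ?_)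
    rw [Real.norm_eq_abs, Real.norm_eq_abs]
    exact le_trans (habs_le _) (le_abs_self _)
  -- conditional expectation pull-out (first identity)
  haveI hsf : SigmaFinite (μ.trim hm) := inferInstance
  have h1 : ∫ ω, ξ 0 ω * ξ t ω ∂μ = ∫ ω, ξ 0 ω * Y ω ∂μ := by
    have hpull := condExp_mul_of_stronglyMeasurable_left (m := M) (mΩ := m0) (μ := μ)
      hξ0M.stronglyMeasurable (by exact hint) hξt_int
    calc ∫ ω, ξ 0 ω * ξ t ω ∂μ
        = ∫ ω, (μ[fun ω' => ξ 0 ω' * ξ t ω'|M]) ω ∂μ :=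
          (integral_condExp (m := M) (m₀ := m0) hm).symm
      _ = ∫ ω, ξ 0 ω * Y ω ∂μ := integral_congr_ae hpull
  -- γt as integral of |Y|
  have hγ : γt = ∫ ω, |Y ω| ∂μ := by
    rw [hγt, hcentered t]
    simp [hYdef]
  have hγ_nn : 0 ≤ γt := hγ ▸ integral_nonneg fun ω => abs_nonneg _
  have hY_int : Integrable Y μ := integrable_condExp
  have hIγ : ∫⁻ ω, ENNReal.ofReal |Y ω| ∂μ = ENNReal.ofReal γt := by
    rw [hγ]
    exact (ofReal_integral_eq_lintegral_ofReal hY_int.abs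
      (ae_of_all _ fun ω => abs_nonneg _)).symm
  -- lintegral expressions of q-norms
  set Aq := ∫ ω, |ξ 0 ω| ^ q ∂μ with hAqdef
  have hAq_nn : 0 ≤ Aq :=
    integral_nonneg fun ω => Real.rpow_nonneg (abs_nonneg _) q
  have hIq0 : ∫⁻ ω, ENNReal.ofReal (|ξ 0 ω| ^ q) ∂μ = ENNReal.ofReal Aq :=
    (ofReal_integral_eq_lintegral_ofReal hLq
      (ae_of_all _ fun ω => Real.rpow_nonneg (abs_nonneg _) q)).symm
  have hIqt : ∫⁻ ω, ENNReal.ofReal (|ξ t ω| ^ q) ∂μ = ENNReal.ofReal Aq := by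
    rw [← (ofReal_integral_eq_lintegral_ofReal hLqt
      (ae_of_all _ fun ω => Real.rpow_nonneg (abs_nonneg _) q)), hIq_eq]
  -- |Y| ≤ Z a.e.
  have hYZ : ∀ᵐ ω ∂μ, |Y ω| ≤ Z ω := by
    have h1' : Y ≤ᵐ[μ] Z :=
      condExp_mono hξt_int hξt_int.abs (ae_of_all _ fun ω => le_abs_self _)
    have h2' : (fun ω => -Y ω) ≤ᵐ[μ] Z := by
      have hneg : μ[fun ω => -ξ t ω|M] =ᵐ[μ] fun ω => -Y ω := by
        exact condExp_neg (m := M) (μ := μ) (ξ t)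
      have := condExp_mono (μ := μ) (m := M) hξt_int.neg hξt_int.abs
        (ae_of_all _ fun ω => neg_le_abs _)
      filter_upwards [this, hneg] with ω hω h2
      rw [← h2]; exact hω
    filter_upwards [h1', h2'] with ω hω1 hω2
    exact abs_le.2 ⟨by linarith [hω2], hω1⟩
  -- measurability helpers
  have hY_meas : Measurable[m0] Y :=
    (stronglyMeasurable_condExp (m := M)).mono hm |>.measurable
  have hW1_measM : Measurable[M] (fun ω => |ξ 0 ω| ^ (q - 1)) :=
    (((Real.continuous_rpow_const (by linarith : (0:ℝ) ≤ q - 1)).comp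
      continuous_abs).measurable).comp hξ0M
  have hW1_meas : Measurable[m0] (fun ω => |ξ 0 ω| ^ (q - 1)) :=
    hW1_measM.mono hm le_rfl
  have hξ0_meas : Measurable[m0] (ξ 0) := hmeas 0
  -- pull-out identity in lintegral form for W = |ξ0|^(q-1), g = |ξ t|
  have hB := lintegral_mul_condexp_aux μ hm hW1_measM
    (fun ω => Real.rpow_nonneg (abs_nonneg _) _) hξt_int.abs
    (ae_of_all _ fun ω => abs_nonneg _)
  -- Hölder (second application)
  have hconj2 : Real.HolderConjugate (q / (q - 1)) q := by
    rw [Real.holderConjugate_iff]; constructor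
    · rw [lt_div_iff₀ hq1pos]; linarith
    · rw [inv_div]
      field_simp
      ring
  have hH2 : ∫⁻ ω, ENNReal.ofReal (|ξ 0 ω| ^ (q - 1)) * ENNReal.ofReal |ξ t ω| ∂μ
      ≤ ENNReal.ofReal Aq := by
    have hf1 : AEMeasurable (fun ω => ENNReal.ofReal (|ξ 0 ω| ^ (q - 1))) μ :=
      hW1_meas.ennreal_ofReal.aemeasurable
    have hf2 : AEMeasurable (fun ω => ENNReal.ofReal |ξ t ω|) μ :=
      ((hmeas t).abs.ennreal_ofReal).aemeasurable
    have hH := ENNReal.lintegral_mul_le_Lp_mul_Lq μ hconj2 hf1 hf2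
    have e1 : ∀ ω, (ENNReal.ofReal (|ξ 0 ω| ^ (q - 1))) ^ (q / (q - 1))
        = ENNReal.ofReal (|ξ 0 ω| ^ q) := by
      intro ω
      rw [ENNReal.ofReal_rpow_of_nonneg (Real.rpow_nonneg (abs_nonneg _) _)
        (by positivity), ← Real.rpow_mul (abs_nonneg _)]
      congr 1
      field_simp
    have e2 : ∀ ω, (ENNReal.ofReal |ξ t ω|) ^ q = ENNReal.ofReal (|ξ t ω| ^ q) := fun ω =>
      ENNReal.ofReal_rpow_of_nonneg (abs_nonneg _) (le_of_lt hqpos)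
    calc ∫⁻ ω, ENNReal.ofReal (|ξ 0 ω| ^ (q - 1)) * ENNReal.ofReal |ξ t ω| ∂μ
        ≤ (∫⁻ ω, (ENNReal.ofReal (|ξ 0 ω| ^ (q - 1))) ^ (q / (q - 1)) ∂μ) ^ (1 / (q / (q - 1)))
            * (∫⁻ ω, (ENNReal.ofReal |ξ t ω|) ^ q ∂μ) ^ (1 / q) := hH
      _ = (ENNReal.ofReal Aq) ^ ((q - 1) / q) * (ENNReal.ofReal Aq) ^ (1 / q) := by
          rw [lintegral_congr e1, lintegral_congr e2, hIq0, hIqt, one_div_div]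
      _ = (ENNReal.ofReal Aq) ^ ((q - 1) / q + 1 / q) :=
          (ENNReal.rpow_add_of_nonneg _ _ (by positivity) (by positivity)).symm
      _ = ENNReal.ofReal Aq := by
          rw [e_q, ENNReal.rpow_one]
  -- combine: second Hölder bound with |Y| ≤ Z
  have hI2 : ∫⁻ ω, ENNReal.ofReal (|ξ 0 ω| ^ (q - 1)) * ENNReal.ofReal |Y ω| ∂μ
      ≤ ENNReal.ofReal Aq := by
    refine le_trans (le_trans (lintegral_mono_ae ?_) (le_of_eq hB)) hH2
    filter_upwards [hYZ] with ω h
    exact mul_le_mul_of_nonneg_left (ENNReal.ofReal_le_ofReal h) (by positivity)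
  -- Hölder (first application)
  have hconj1 : Real.HolderConjugate (q - 1) ((q - 1) / (q - 2)) := by
    rw [Real.holderConjugate_iff]; constructor
    · exact hq1
    · rw [inv_div]
      field_simp
      ring
  have hH1 : ∫⁻ ω, ENNReal.ofReal |ξ 0 ω| * ENNReal.ofReal |Y ω| ∂μ
      ≤ (ENNReal.ofReal Aq) ^ (1 / (q - 1)) * (ENNReal.ofReal γt) ^ ((q - 2) / (q - 1)) := by
    set F : Ω → ENNReal := fun ω =>
      ENNReal.ofReal (|ξ 0 ω|) * (ENNReal.ofReal (|Y ω|)) ^ (1 / (q - 1)) with hFdef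
    set G : Ω → ENNReal := fun ω => (ENNReal.ofReal (|Y ω|)) ^ ((q - 2) / (q - 1)) with hGdef
    have hYae : AEMeasurable (fun ω => ENNReal.ofReal |Y ω|) μ :=
      (hY_meas.abs.ennreal_ofReal).aemeasurable
    have hFmeas : AEMeasurable F μ :=
      ((hξ0_meas.abs.ennreal_ofReal).aemeasurable).mul (hYae.pow_const _)
    have hGmeas : AEMeasurable G μ := hYae.pow_const _
    have hfg : ∀ ω, ENNReal.ofReal |ξ 0 ω| * ENNReal.ofReal |Y ω| = (F * G) ω := by
      intro ω
      show _ = (ENNReal.ofReal |ξ 0 ω| * (ENNReal.ofReal |Y ω|) ^ (1 / (q - 1)))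
        * (ENNReal.ofReal |Y ω|) ^ ((q - 2) / (q - 1))
      rw [mul_assoc, ← ENNReal.rpow_add_of_nonneg _ _ (by positivity) (by positivity),
        e_add, ENNReal.rpow_one]
    have eF : ∀ ω, F ω ^ (q - 1)
        = ENNReal.ofReal (|ξ 0 ω| ^ (q - 1)) * ENNReal.ofReal |Y ω| := by
      intro ω
      show (ENNReal.ofReal |ξ 0 ω| * (ENNReal.ofReal |Y ω|) ^ (1 / (q - 1))) ^ (q - 1) = _
      rw [ENNReal.mul_rpow_of_nonneg _ _ (le_of_lt hq1pos),
        ENNReal.ofReal_rpow_of_nonneg (abs_nonneg _) (le_of_lt hq1pos),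
        ← ENNReal.rpow_mul,
        e_mul1, ENNReal.rpow_one]
    have eG : ∀ ω, G ω ^ ((q - 1) / (q - 2)) = ENNReal.ofReal |Y ω| := by
      intro ω
      show ((ENNReal.ofReal |Y ω|) ^ ((q - 2) / (q - 1))) ^ ((q - 1) / (q - 2)) = _
      rw [← ENNReal.rpow_mul,
e_mul2, ENNReal.rpow_one]
    calc ∫⁻ ω, ENNReal.ofReal |ξ 0 ω| * ENNReal.ofReal |Y ω| ∂μ
        = ∫⁻ ω, (F * G) ω ∂μ := lintegral_congr hfg
      _ ≤ (∫⁻ ω, F ω ^ (q - 1) ∂μ) ^ (1 / (q - 1))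
          * (∫⁻ ω, G ω ^ ((q - 1) / (q - 2)) ∂μ) ^ (1 / ((q - 1) / (q - 2))) :=
          ENNReal.lintegral_mul_le_Lp_mul_Lq μ hconj1 hFmeas hGmeas
      _ = (∫⁻ ω, ENNReal.ofReal (|ξ 0 ω| ^ (q - 1)) * ENNReal.ofReal |Y ω| ∂μ) ^ (1 / (q - 1))
          * (ENNReal.ofReal γt) ^ ((q - 2) / (q - 1)) := by
          rw [lintegral_congr eF, lintegral_congr eG, hIγ, one_div_div]
      _ ≤ (ENNReal.ofReal Aq) ^ (1 / (q - 1)) * (ENNReal.ofReal γt) ^ ((q - 2) / (q - 1)) :=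
          mul_le_mul_of_nonneg_right (ENNReal.rpow_le_rpow hI2 (by positivity)) (by positivity)
  -- final assembly
  have hRHS : (ENNReal.ofReal Aq) ^ (1 / (q - 1)) * (ENNReal.ofReal γt) ^ ((q - 2) / (q - 1))
      = ENNReal.ofReal (γt ^ ((q - 2) / (q - 1)) * (Aq ^ (1 / q)) ^ (q / (q - 1))) := by
    rw [ENNReal.ofReal_rpow_of_nonneg hAq_nn (by positivity),
      ENNReal.ofReal_rpow_of_nonneg hγ_nn (by positivity),
      ← ENNReal.ofReal_mul (Real.rpow_nonneg hAq_nn _), mul_comm]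
    congr 2
    rw [← Real.rpow_mul hAq_nn]
    congr 1
    field_simp
  rw [hcentered 0, hcentered t, zero_mul, sub_zero, h1]
  have hnorm := norm_integral_le_lintegral_norm (μ := μ) (f := fun ω => ξ 0 ω * Y ω)
  have hcongr : ∫⁻ ω, ENNReal.ofReal ‖ξ 0 ω * Y ω‖ ∂μ
      = ∫⁻ ω, ENNReal.ofReal |ξ 0 ω| * ENNReal.ofReal |Y ω| ∂μ :=
    lintegral_congr fun ω => by
      rw [Real.norm_eq_abs, abs_mul, ENNReal.ofReal_mul (abs_nonneg _)]
  have hRHS_nn : 0 ≤ γt ^ ((q - 2) / (q - 1)) * (Aq ^ (1 / q)) ^ (q / (q - 1)) := by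
    positivity
  calc |∫ ω, ξ 0 ω * Y ω ∂μ|
      ≤ (∫⁻ ω, ENNReal.ofReal ‖ξ 0 ω * Y ω‖ ∂μ).toReal := by
        simpa [Real.norm_eq_abs] using hnorm
    _ ≤ γt ^ ((q - 2) / (q - 1)) * (Aq ^ (1 / q)) ^ (q / (q - 1)) := by
        rw [hcongr]
        have := ENNReal.toReal_mono (ENNReal.ofReal_ne_top) (le_trans hH1 (le_of_eq hRHS))
        rwa [ENNReal.toReal_ofReal hRHS_nn] at this
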